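/- For a multi-valued (MV) register where the state is the set of maximal (with respect to a partial 'happens-before' order on vector clocks) updates received, the state depends only on the set of updates delivered, independent of delivery order and multiplicity. -/

import Mathlib

open Classical in
/-- MV-register insertion: applying an update `u` to a state `S` yields the
set of maximal elements of `S ∪ {u}` (with respect to the partial
happens-before order on vector clocks). -/
noncomputable def mvInsert {α : Type} [PartialOrder α] [DecidableEq α]
    (S : Finset α) (u : α) : Finset α :=
  (insert u S).filter (fun x => ∀ y ∈ insert u S, ¬ x < y)

open Classical in
noncomputable def mvMax {α : Type} [PartialOrder α] [DecidableEq α]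
    (S : Finset α) : Finset α :=
  S.filter (fun x => ∀ y ∈ S, ¬ x < y)

lemma mvMax_mem {α : Type} [PartialOrder α] [DecidableEq α]
    {S : Finset α} {x : α} :
    x ∈ mvMax S ↔ x ∈ S ∧ ∀ y ∈ S, ¬ x < y := by
  simp [mvMax]

lemma mvInsert_mem {α : Type} [PartialOrder α] [DecidableEq α]
    {S : Finset α} {u x : α} :
    x ∈ mvInsert S u ↔ x ∈ insert u S ∧ ∀ y ∈ insert u S, ¬ x < y := by
  simp [mvInsert]

/-- Every element of a finset is below some maximal element. -/
lemma exists_le_mvMax {α : Type} [PartialOrder α] [DecidableEq α]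
    {S : Finset α} {y : α} (hy : y ∈ S) : ∃ z ∈ mvMax S, y ≤ z := by
  classical
  obtain ⟨z, hz, hmax⟩ := (S.filter (fun w => y ≤ w)).exists_maximal
    ⟨y, by simp [hy]⟩
  rw [Finset.mem_filter] at hz
  refine ⟨z, mvMax_mem.mpr ⟨hz.1, ?_⟩, hz.2⟩
  intro w hw hlt
  exact lt_irrefl _ (hlt.trans_le (hmax (Finset.mem_filter.mpr ⟨hw, hz.2.trans hlt.le⟩) hlt.le))

lemma mvInsert_mvMax {α : Type} [PartialOrder α] [DecidableEq α]
    (S : Finset α) (u : α) :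
    mvInsert (mvMax S) u = mvMax (insert u S) := by
  classical
  ext x
  rw [mvInsert_mem, mvMax_mem]
  constructor
  · rintro ⟨hx, hmax⟩
    rcases Finset.mem_insert.mp hx with rfl | hxS
    · refine ⟨Finset.mem_insert_self _ _, ?_⟩
      intro y hy hlt
      rcases Finset.mem_insert.mp hy with rfl | hyS
      · exact lt_irrefl _ hlt
      · obtain ⟨z, hz, hyz⟩ := exists_le_mvMax hyS
        exact hmax z (Finset.mem_insert_of_mem hz) (hlt.trans_le hyz)
    · have hxS' := (mvMax_mem.mp hxS).1
      refine ⟨Finset.mem_insert_of_mem hxS', ?_⟩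
      intro y hy hlt
      rcases Finset.mem_insert.mp hy with rfl | hyS
      · exact hmax y (Finset.mem_insert_self _ _) hlt
      · obtain ⟨z, hz, hyz⟩ := exists_le_mvMax hyS
        exact hmax z (Finset.mem_insert_of_mem hz) (hlt.trans_le hyz)
  · rintro ⟨hx, hmax⟩
    have hmax' : ∀ y ∈ insert u (mvMax S), ¬ x < y := by
      intro y hy
      rcases Finset.mem_insert.mp hy with rfl | hyS
      · exact hmax y (Finset.mem_insert_self _ _)
      · exact hmax y (Finset.mem_insert_of_mem (mvMax_mem.mp hyS).1)
    rcases Finset.mem_insert.mp hx with rfl | hxS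
    · exact ⟨Finset.mem_insert_self _ _, hmax'⟩
    · refine ⟨Finset.mem_insert_of_mem (mvMax_mem.mpr ⟨hxS, ?_⟩), hmax'⟩
      intro y hy
      exact hmax y (Finset.mem_insert_of_mem hy)

lemma mvInsert_eq {α : Type} [PartialOrder α] [DecidableEq α]
    (S : Finset α) (u : α) : mvInsert S u = mvMax (insert u S) := rfl

lemma foldl_mvMax {α : Type} [PartialOrder α] [DecidableEq α]
    (A : Finset α) (l : List α) :
    l.foldl mvInsert (mvMax A) = mvMax (A ∪ l.toFinset) := by
  classical
  induction l generalizing A with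
  | nil => simp
  | cons u t ih =>
      simp only [List.foldl_cons, mvInsert_mvMax, ih, List.toFinset_cons]
      congr 1
      ext x
      simp [Finset.mem_insert, Finset.mem_union]

lemma foldl_eq {α : Type} [PartialOrder α] [DecidableEq α]
    (S₀ : Finset α) (u : α) (t : List α) :
    (u :: t).foldl mvInsert S₀ = mvMax (S₀ ∪ (u :: t).toFinset) := by
  classical
  have : (u :: t).foldl mvInsert S₀ = t.foldl mvInsert (mvMax (insert u S₀)) := by
    simp [mvInsert_eq]
  rw [this, foldl_mvMax]
  congr 1
  ext x
  simp [Finset.mem_insert, Finset.mem_union]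

/-- For a multi-valued register, the state (the antichain of maximal received
updates) depends only on the set of updates delivered, independent of delivery
order and multiplicity. -/
theorem mv_state_depends_only_on_set
    {α : Type} [PartialOrder α] [DecidableEq α]
    (S₀ : Finset α) (l₁ l₂ : List α)
    (hsame : ∀ u, u ∈ l₁ ↔ u ∈ l₂) :
    l₁.foldl mvInsert S₀ = l₂.foldl mvInsert S₀ := by
  classical
  have htf : l₁.toFinset = l₂.toFinset := by
    ext x; simpa using hsame x
  cases l₁ with
  | nil =>
      cases l₂ with
      | nil => rfl
      | cons v t₂ => exact absurd ((hsame v).mpr (by simp)) (by simp)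
  | cons u t₁ =>
      cases l₂ with
      | nil => exact absurd ((hsame u).mp (by simp)) (by simp)
      | cons v t₂ => rw [foldl_eq, foldl_eq, htf]
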